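/- Let T(Γ,ρ;Υ) be a generalized truncation and let g ∈ Aut(Γ). Then g lifts to an automorphism of T(Γ,ρ;Υ) if and only if for every vertex u ∈ V(Γ) and every pair of neighbors w, x of u in Γ: v_{ρ(u,x)} is adjacent to v_{ρ(u,w)} in Υ if and only if v_{ρ(u^g,x^g)} is adjacent to v_{ρ(u^g,w^g)} in Υ. -/

import Mathlib

open SimpleGraph

variable {V W : Type*}

/-- The generalized truncation `T(Γ,ρ;Υ)` of a graph `Γ` by a graph `Υ`,
with respect to a labeling `ρ` of the darts of `Γ` by vertices of `Υ`. -/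
def trunc (Γ : SimpleGraph V) (Υ : SimpleGraph W)
    (ρ : ∀ u w : V, Γ.Adj u w → W) : SimpleGraph (V × W) where
  Adj x y := (x.1 = y.1 ∧ Υ.Adj x.2 y.2) ∨
    (∃ h : Γ.Adj x.1 y.1, x.2 = ρ x.1 y.1 h ∧ y.2 = ρ y.1 x.1 h.symm)
  symm := ⟨by
    rintro ⟨u, i⟩ ⟨w, j⟩ (⟨h1, h2⟩ | ⟨h, h1, h2⟩)
    · exact Or.inl ⟨h1.symm, h2.symm⟩
    · exact Or.inr ⟨h.symm, h2, h1⟩⟩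
  loopless := ⟨by
    rintro ⟨u, i⟩ (⟨_, h⟩ | ⟨h, _⟩)
    · exact Υ.loopless.irrefl _ h
    · exact Γ.loopless.irrefl _ h⟩

/-- `ρ` is a vertex-neighborhood labeling of `Γ`: for every vertex `u`, the restriction
of `ρ` to the darts emanating from `u` is a bijection onto the vertex set of `Υ`. -/
def IsVNLabeling (Γ : SimpleGraph V) (ρ : ∀ u w : V, Γ.Adj u w → W) : Prop :=
  ∀ u : V, ∀ i : W, ∃! w : V, ∃ h : Γ.Adj u w, ρ u w h = i

/-- A permutation of the vertices is an automorphism of the graph. -/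
def IsAut (Γ : SimpleGraph V) (π : Equiv.Perm V) : Prop :=
  ∀ a b : V, Γ.Adj (π a) (π b) ↔ Γ.Adj a b

/-- The automorphism group of a graph, as a subgroup of the symmetric group. -/
def autG (Γ : SimpleGraph V) : Subgroup (Equiv.Perm V) where
  carrier := {π | IsAut Γ π}
  one_mem' := by intro a b; rfl
  mul_mem' := by
    intro f g hf hg a b
    exact (hf (g a) (g b)).trans (hg a b)
  inv_mem' := by
    intro f hf a b
    conv_rhs => rw [← Equiv.apply_symm_apply f a, ← Equiv.apply_symm_apply f b]
    exact (hf _ _).symm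

/-- An automorphism `g` of `Γ` lifts to an automorphism of the generalized truncation
`T(Γ,ρ;Υ)` if some automorphism of `T(Γ,ρ;Υ)` maps each part `V(Γ̃_u)` of the natural
partition onto the part `V(Γ̃_{u^g})`. -/
def Lifts {V W : Type*} (Γ : SimpleGraph V) (Υ : SimpleGraph W)
    (ρ : ∀ u w : V, Γ.Adj u w → W) (g : Equiv.Perm V) : Prop :=
  ∃ gt : Equiv.Perm (V × W), IsAut (trunc Γ Υ ρ) gt ∧
    ∀ (u : V) (i : W), (gt (u, i)).1 = g u

section Aux

variable (Γ : SimpleGraph V) (ρ : ∀ u w : V, Γ.Adj u w → W)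

lemma rho_congr {u u' w w' : V} (eu : u = u') (ew : w = w')
    (h : Γ.Adj u w) (h' : Γ.Adj u' w') : ρ u w h = ρ u' w' h' := by
  subst eu; subst ew; rfl

lemma rho_inj (hρ : IsVNLabeling Γ ρ) {u w x : V} (hw : Γ.Adj u w) (hx : Γ.Adj u x)
    (e : ρ u w hw = ρ u x hx) : w = x :=
  (hρ u (ρ u x hx)).unique ⟨hw, e⟩ ⟨hx, rfl⟩

noncomputable def nbr (hρ : IsVNLabeling Γ ρ) (u : V) (i : W) : V :=
  (hρ u i).exists.choose

lemma nbr_adj (hρ : IsVNLabeling Γ ρ) (u : V) (i : W) : Γ.Adj u (nbr Γ ρ hρ u i) :=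
  (hρ u i).exists.choose_spec.choose

lemma nbr_spec (hρ : IsVNLabeling Γ ρ) (u : V) (i : W) :
    ρ u (nbr Γ ρ hρ u i) (nbr_adj Γ ρ hρ u i) = i :=
  (hρ u i).exists.choose_spec.choose_spec

lemma nbr_eq (hρ : IsVNLabeling Γ ρ) {u w : V} (h : Γ.Adj u w) :
    nbr Γ ρ hρ u (ρ u w h) = w :=
  (hρ u (ρ u w h)).unique ⟨nbr_adj Γ ρ hρ u _, nbr_spec Γ ρ hρ u _⟩ ⟨h, rfl⟩

end Aux

/-- An automorphism `g` of `Γ` lifts to an automorphism of the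
generalized truncation `T(Γ,ρ;Υ)` if and only if for every vertex `u` and every pair of
its neighbors `w`, `x`: `v_{ρ(u,x)} ∼ v_{ρ(u,w)}` in `Υ` iff
`v_{ρ(u^g,x^g)} ∼ v_{ρ(u^g,w^g)}` in `Υ`. -/
theorem stmt5 {V W : Type*} [Fintype V] [Fintype W] [DecidableEq V] [DecidableEq W]
    {k : ℕ} (Γ : SimpleGraph V) [DecidableRel Γ.Adj] (Υ : SimpleGraph W)
    (hreg : Γ.IsRegularOfDegree k) (hcard : Fintype.card W = k)
    (ρ : ∀ u w : V, Γ.Adj u w → W) (hρ : IsVNLabeling Γ ρ)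
    (g : Equiv.Perm V) (hg : IsAut Γ g) :
    Lifts Γ Υ ρ g ↔
      ∀ (u w x : V) (hw : Γ.Adj u w) (hx : Γ.Adj u x),
        (Υ.Adj (ρ u x hx) (ρ u w hw) ↔
          Υ.Adj (ρ (g u) (g x) ((hg u x).mpr hx)) (ρ (g u) (g w) ((hg u w).mpr hw))) := by
  classical
  constructor
  · rintro ⟨gt, hA, hfst⟩ u w x hw hx
    have key : ∀ (a b : V) (h : Γ.Adj a b),
        (gt (a, ρ a b h)).2 = ρ (g a) (g b) ((hg a b).mpr h) := by
      intro a b h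
      have hadj : (trunc Γ Υ ρ).Adj (a, ρ a b h) (b, ρ b a h.symm) :=
        Or.inr ⟨h, rfl, rfl⟩
      have hadj' := (hA _ _).mpr hadj
      rcases hadj' with ⟨h1, _⟩ | ⟨h', h1, h2⟩
      · exfalso
        rw [hfst, hfst] at h1
        exact h.ne (g.injective h1)
      · rw [h1]
        exact rho_congr Γ ρ (hfst a _) (hfst b _) _ _
    have ha : gt (u, ρ u x hx) = (g u, ρ (g u) (g x) ((hg u x).mpr hx)) :=
      Prod.ext (hfst u _) (key u x hx)
    have hb : gt (u, ρ u w hw) = (g u, ρ (g u) (g w) ((hg u w).mpr hw)) :=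
      Prod.ext (hfst u _) (key u w hw)
    have red : ∀ (a : V) (i j : W),
        (trunc Γ Υ ρ).Adj (a, i) (a, j) ↔ Υ.Adj i j := by
      intro a i j
      constructor
      · rintro (⟨_, h2⟩ | ⟨h', -⟩)
        · exact h2
        · exact absurd h' (Γ.loopless.irrefl a)
      · intro h; exact Or.inl ⟨rfl, h⟩
    have hiff := hA (u, ρ u x hx) (u, ρ u w hw)
    rw [ha, hb, red, red] at hiff
    exact hiff.symm
  · intro H
    set f : V × W → V × W := fun p =>
      (g p.1, ρ (g p.1) (g (nbr Γ ρ hρ p.1 p.2))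
        ((hg _ _).mpr (nbr_adj Γ ρ hρ p.1 p.2))) with hf
    have hinj : Function.Injective f := by
      rintro ⟨u, i⟩ ⟨u', i'⟩ he
      have e1 : g u = g u' := congrArg Prod.fst he
      obtain rfl : u = u' := g.injective e1
      have e2 := congrArg Prod.snd he
      have e3 : nbr Γ ρ hρ u i = nbr Γ ρ hρ u i' :=
        g.injective (rho_inj Γ ρ hρ _ _ e2)
      have : i = i' := by
        rw [← nbr_spec Γ ρ hρ u i, ← nbr_spec Γ ρ hρ u i']
        exact rho_congr Γ ρ rfl e3 _ _
      rw [this]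
    have hbij : Function.Bijective f := Finite.injective_iff_bijective.mp hinj
    refine ⟨Equiv.ofBijective f hbij, ?_, fun u i => rfl⟩
    rintro ⟨u, i⟩ ⟨w, j⟩
    show (trunc Γ Υ ρ).Adj (f (u, i)) (f (w, j)) ↔ (trunc Γ Υ ρ).Adj (u, i) (w, j)
    constructor
    · rintro (⟨h1, h2⟩ | ⟨h', h1, h2⟩)
      · obtain rfl : u = w := g.injective h1
        refine Or.inl ⟨rfl, ?_⟩
        have := (H u (nbr Γ ρ hρ u j) (nbr Γ ρ hρ u i)
          (nbr_adj Γ ρ hρ u j) (nbr_adj Γ ρ hρ u i)).mpr h2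
        rwa [nbr_spec Γ ρ hρ u i, nbr_spec Γ ρ hρ u j] at this
      · have e : nbr Γ ρ hρ u i = w := g.injective (rho_inj Γ ρ hρ _ _ h1)
        have e' : nbr Γ ρ hρ w j = u := g.injective (rho_inj Γ ρ hρ _ _ h2)
        have huw : Γ.Adj u w := (hg u w).mp h'
        refine Or.inr ⟨huw, ?_, ?_⟩
        · rw [← nbr_spec Γ ρ hρ u i]
          exact rho_congr Γ ρ rfl e _ _
        · rw [← nbr_spec Γ ρ hρ w j]
          exact rho_congr Γ ρ rfl e' _ _
    · rintro (⟨h1, h2⟩ | ⟨h', h1, h2⟩)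
      · obtain rfl : u = w := h1
        refine Or.inl ⟨rfl, ?_⟩
        refine (H u (nbr Γ ρ hρ u j) (nbr Γ ρ hρ u i)
          (nbr_adj Γ ρ hρ u j) (nbr_adj Γ ρ hρ u i)).mp ?_
        rw [nbr_spec Γ ρ hρ u i, nbr_spec Γ ρ hρ u j]
        exact h2
      · have e : nbr Γ ρ hρ u i = w := by
          rw [show i = ρ u w h' from h1]; exact nbr_eq Γ ρ hρ h'
        have e' : nbr Γ ρ hρ w j = u := by
          rw [show j = ρ w u h'.symm from h2]; exact nbr_eq Γ ρ hρ h'.symm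
        refine Or.inr ⟨(hg u w).mpr h', ?_, ?_⟩
        · exact rho_congr Γ ρ rfl (congrArg g e) _ _
        · exact rho_congr Γ ρ rfl (congrArg g e') _ _
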